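/- For all α, β, γ ∈ ℝ, the product exp(−iαJ_z)·exp(−iβJ_y)·exp(−iγJ_z) equals the explicit matrix U(α,β,γ) = [[e^{−i(α+γ)}cos²(β/2), −(e^{−iα}/√2)·sin β, e^{−i(α−γ)}sin²(β/2)], [(e^{−iγ}/√2)·sin β, cos β, −(e^{iγ}/√2)·sin β], [e^{i(α−γ)}sin²(β/2), (e^{iα}/√2)·sin β, e^{i(α+γ)}cos²(β/2)]]. -/

import Mathlib

open Matrix

/-- The spin-1 generator `J_y`. -/
noncomputable def Jy : Matrix (Fin 3) (Fin 3) ℂ :=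
  (1 / (Real.sqrt 2 : ℂ)) • !![0, -Complex.I, 0; Complex.I, 0, -Complex.I; 0, Complex.I, 0]

/-- The spin-1 generator `J_z`. -/
noncomputable def Jz : Matrix (Fin 3) (Fin 3) ℂ := !![1, 0, 0; 0, 0, 0; 0, 0, -1]

/-- The Wigner matrix `U(α,β,γ)` of the spin-1 `ZYZ` Euler parameterization. -/
noncomputable def Umat (α β γ : ℝ) : Matrix (Fin 3) (Fin 3) ℂ :=
  !![Complex.exp (-Complex.I * (↑α + ↑γ)) * (Real.cos (β/2) : ℂ)^2,
       -(Complex.exp (-Complex.I * ↑α) / (Real.sqrt 2 : ℂ)) * (Real.sin β : ℂ),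
       Complex.exp (-Complex.I * (↑α - ↑γ)) * (Real.sin (β/2) : ℂ)^2;
     (Complex.exp (-Complex.I * ↑γ) / (Real.sqrt 2 : ℂ)) * (Real.sin β : ℂ),
       (Real.cos β : ℂ),
       -(Complex.exp (Complex.I * ↑γ) / (Real.sqrt 2 : ℂ)) * (Real.sin β : ℂ);
     Complex.exp (Complex.I * (↑α - ↑γ)) * (Real.sin (β/2) : ℂ)^2,
       (Complex.exp (Complex.I * ↑α) / (Real.sqrt 2 : ℂ)) * (Real.sin β : ℂ),
       Complex.exp (Complex.I * (↑α + ↑γ)) * (Real.cos (β/2) : ℂ)^2]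

open Complex in
lemma hs2 : ((Real.sqrt 2 : ℝ) : ℂ)^2 = 2 := by
  norm_cast
  rw [Real.sq_sqrt] <;> norm_num

lemma hsne : ((Real.sqrt 2 : ℝ) : ℂ) ≠ 0 := by
  simp [Real.sqrt_eq_zero']

noncomputable def Smat : Matrix (Fin 3) (Fin 3) ℂ :=
  !![1, 1, 1; Complex.I * (Real.sqrt 2 : ℂ), 0, -(Complex.I * (Real.sqrt 2 : ℂ)); -1, 1, -1]

noncomputable def Tmat : Matrix (Fin 3) (Fin 3) ℂ :=
  !![1/4, -(Complex.I * (Real.sqrt 2 : ℂ))/4, -1/4;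
     1/2, 0, 1/2;
     1/4, (Complex.I * (Real.sqrt 2 : ℂ))/4, -1/4]

lemma hST : Smat * Tmat = 1 := by
  have h2 := hs2
  ext i j
  fin_cases i <;> fin_cases j <;>
    simp [Smat, Tmat, Matrix.mul_apply, Fin.sum_univ_succ, Matrix.one_apply] <;>
    (try ring_nf) <;> simp only [Complex.I_sq, hs2] <;> ring

lemma hTS : Tmat * Smat = 1 := mul_eq_one_comm.mp hST

lemma hSinv : Smat⁻¹ = Tmat := Matrix.inv_eq_right_inv hST


lemma diag3 (a b c : ℂ) : Matrix.diagonal ![a, b, c] = !![a,0,0; 0,b,0; 0,0,c] := by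
  ext i j
  fin_cases i <;> fin_cases j <;> simp [Matrix.diagonal, Matrix.vecHead, Matrix.vecTail]

set_option maxHeartbeats 1000000 in
lemma Jy_conj (β : ℝ) : (-(Complex.I * (β : ℂ))) • Jy =
    Smat * (Matrix.diagonal ![-(Complex.I * (β : ℂ)), 0, Complex.I * (β : ℂ)]) * Tmat := by
  rw [diag3]
  ext i j
  fin_cases i <;> fin_cases j <;>
    simp [Smat, Tmat, Jy, Matrix.mul_apply, Fin.sum_univ_succ] <;>
    field_simp <;>
    (try ring_nf) <;> simp only [Complex.I_sq, hs2] <;> ring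

lemma expJy (β : ℝ) : NormedSpace.exp ((-(Complex.I * (β : ℂ))) • Jy) =
    !![(1 + (Real.cos β : ℂ))/2, -(Real.sin β : ℂ)/(Real.sqrt 2 : ℂ), (1 - (Real.cos β : ℂ))/2;
       (Real.sin β : ℂ)/(Real.sqrt 2 : ℂ), (Real.cos β : ℂ), -(Real.sin β : ℂ)/(Real.sqrt 2 : ℂ);
       (1 - (Real.cos β : ℂ))/2, (Real.sin β : ℂ)/(Real.sqrt 2 : ℂ), (1 + (Real.cos β : ℂ))/2] := by
  have hU : IsUnit Smat := ⟨⟨Smat, Tmat, hST, hTS⟩, rfl⟩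
  rw [Jy_conj β, ← hSinv, Matrix.exp_conj Smat _ hU, Matrix.exp_diagonal, hSinv]
  have hv : NormedSpace.exp ![-(Complex.I * (β : ℂ)), 0, Complex.I * (β : ℂ)]
      = ![Complex.exp (-(Complex.I * (β : ℂ))), 1, Complex.exp (Complex.I * (β : ℂ))] := by
    rw [Pi.exp_def]
    funext i
    fin_cases i <;> simp [← Complex.exp_eq_exp_ℂ]
  rw [hv, diag3]
  have he1 : Complex.exp (Complex.I * (β : ℂ)) = (Real.cos β : ℂ) + (Real.sin β : ℂ) * Complex.I := by
    rw [mul_comm, Complex.exp_mul_I, Complex.ofReal_cos, Complex.ofReal_sin]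
  have he2 : Complex.exp (-(Complex.I * (β : ℂ))) = (Real.cos β : ℂ) - (Real.sin β : ℂ) * Complex.I := by
    rw [show -(Complex.I * (β : ℂ)) = ((-β : ℝ) : ℂ) * Complex.I by push_cast; ring,
      Complex.exp_mul_I]
    push_cast
    rw [Complex.cos_neg, Complex.sin_neg, ← Complex.ofReal_cos, ← Complex.ofReal_sin]
    ring
  ext i j
  fin_cases i <;> fin_cases j <;>
    simp [Smat, Tmat, Matrix.mul_apply, Fin.sum_univ_succ, he1, he2] <;>
    field_simp <;>
    (try ring_nf) <;> simp only [Complex.I_sq, hs2] <;> ring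

lemma expJz (t : ℝ) : NormedSpace.exp ((-(Complex.I * (t : ℂ))) • Jz) =
    !![Complex.exp (-(Complex.I * (t : ℂ))), 0, 0; 0, 1, 0; 0, 0, Complex.exp (Complex.I * (t : ℂ))] := by
  have hd : (-(Complex.I * (t : ℂ))) • Jz
      = Matrix.diagonal ![-(Complex.I * (t : ℂ)), 0, Complex.I * (t : ℂ)] := by
    rw [diag3]
    ext i j
    fin_cases i <;> fin_cases j <;> simp [Jz, Matrix.vecHead, Matrix.vecTail] <;> ring
  rw [hd, Matrix.exp_diagonal]
  have hv : NormedSpace.exp ![-(Complex.I * (t : ℂ)), 0, Complex.I * (t : ℂ)]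
      = ![Complex.exp (-(Complex.I * (t : ℂ))), 1, Complex.exp (Complex.I * (t : ℂ))] := by
    rw [Pi.exp_def]
    funext i
    fin_cases i <;> simp [← Complex.exp_eq_exp_ℂ]
  rw [hv, diag3]


/-- the product `exp(−iαJ_z)·exp(−iβJ_y)·exp(−iγJ_z)` equals the
explicit Wigner matrix `U(α,β,γ)`, for all real `α, β, γ`. -/
theorem stmt3 (α β γ : ℝ) :
    NormedSpace.exp ((-(Complex.I * (α : ℂ))) • Jz)
      * NormedSpace.exp ((-(Complex.I * (β : ℂ))) • Jy)
      * NormedSpace.exp ((-(Complex.I * (γ : ℂ))) • Jz) = Umat α β γ := by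
  rw [expJz α, expJy β, expJz γ]
  have hcc : Complex.cos ((β:ℂ)/2)^2 = 1/2 + Complex.cos (β:ℂ)/2 := by
    have h := Complex.cos_sq ((β:ℂ)/2)
    rw [show 2*((β:ℂ)/2) = (β:ℂ) by ring] at h
    exact h
  have hss : Complex.sin ((β:ℂ)/2)^2 = 1/2 - Complex.cos (β:ℂ)/2 := by
    rw [Complex.sin_sq, hcc]; ring
  ext i j
  fin_cases i <;> fin_cases j <;>
    simp [Umat, Matrix.mul_apply, Fin.sum_univ_succ, Complex.exp_sub, Complex.exp_add,
      Complex.exp_neg, mul_add, mul_sub, hcc, hss] <;>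
    ring
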